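/- arXiv:2603.24338 — 2 statements merged into one kernel-verified Lean document; each statement's English description precedes it below -/
import Mathlib

section
/- Let N, L be positive integers, M = L·N, x : Fin M → ℂ an input sequence, and g : Fin N → ℂ a gain-mismatch sequence. Define y : Fin M → ℂ by y_k = (1 + g_{k mod N}) · x_k. Then for every m with 0 ≤ m < M, the normalized M-point DFT of y satisfies ỹ_m = x̃_m + ∑_{p=0}^{N-1} g̃_p · x̃_{(m − L·p) mod M}, where x̃ is the normalized M-point DFT of x and g̃ is the normalized N-point DFT of g. -/
open Complex Finset

/-- The normalized `M`-point DFT of `u : Fin M → ℂ`, evaluated at an integer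
frequency index `k` (it is `M`-periodic in `k`). -/
noncomputable def dft (M : ℕ) (u : Fin M → ℂ) (k : ℤ) : ℂ :=
  (1 / (M : ℂ)) *
    ∑ n : Fin M,
      Complex.exp (-2 * Real.pi * Complex.I * (k : ℂ) * ((n : ℕ) : ℂ) / (M : ℂ)) * u n

lemma exp_two_pi_int (n : ℤ) : Complex.exp (2 * Real.pi * Complex.I * n) = 1 := by
  rw [show (2 * (Real.pi : ℂ) * Complex.I * n) = n * (2 * Real.pi * Complex.I) by ring]
  exact Complex.exp_int_mul_two_pi_mul_I n

lemma sum_exp_orth (N : ℕ) (hN : 0 < N) (d : ℤ) :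
    ∑ p ∈ range N, Complex.exp (2 * Real.pi * Complex.I * d * p / N) =
      if (N : ℤ) ∣ d then (N : ℂ) else 0 := by
  have hNc : (N : ℂ) ≠ 0 := Nat.cast_ne_zero.mpr hN.ne'
  set z : ℂ := Complex.exp (2 * Real.pi * Complex.I * d / N) with hz
  have hpow : ∀ p : ℕ, Complex.exp (2 * Real.pi * Complex.I * d * p / N) = z ^ p := by
    intro p
    rw [hz, ← Complex.exp_nat_mul]
    congr 1
    ring
  have hzN : z ^ N = 1 := by
    rw [hz, ← Complex.exp_nat_mul,
      show (N : ℂ) * (2 * Real.pi * Complex.I * d / N) = 2 * Real.pi * Complex.I * d by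
        field_simp]
    exact exp_two_pi_int d
  simp only [hpow]
  by_cases hdvd : (N : ℤ) ∣ d
  · obtain ⟨c, rfl⟩ := hdvd
    have hz1 : z = 1 := by
      rw [hz, show (2 * Real.pi * Complex.I * (((N : ℤ) * c : ℤ) : ℂ) / N : ℂ)
          = 2 * Real.pi * Complex.I * c by push_cast; field_simp]
      exact exp_two_pi_int c
    simp [hz1]
  · have h2 : (2 * Real.pi * Complex.I : ℂ) ≠ 0 := by
      simp [Real.pi_ne_zero, Complex.I_ne_zero]
    have hz1 : z ≠ 1 := by
      intro h
      rw [hz, Complex.exp_eq_one_iff] at h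
      obtain ⟨k, hk⟩ := h
      apply hdvd
      have hdk : (d : ℂ) = (k : ℂ) * N := by
        have : (2 * Real.pi * Complex.I : ℂ) * d = (2 * Real.pi * Complex.I) * ((k : ℂ) * N) := by
          field_simp at hk
          linear_combination (2 * Real.pi * Complex.I : ℂ) * hk
        exact mul_left_cancel₀ h2 this
      have : d = k * N := by exact_mod_cast hdk
      exact ⟨k, by linarith⟩
    rw [geom_sum_eq hz1, hzN]
    simp [hdvd]

lemma inv_dft (N : ℕ) (hN : 0 < N) (g : Fin N → ℂ) (n : ℕ) :
    ∑ p ∈ range N, dft N g p * Complex.exp (2 * Real.pi * Complex.I * p * n / N) =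
      g ⟨n % N, Nat.mod_lt _ hN⟩ := by
  have hNc : (N : ℂ) ≠ 0 := Nat.cast_ne_zero.mpr hN.ne'
  simp only [dft]
  have expand : ∀ p ∈ range N,
      (1 / (N : ℂ) *
          ∑ j : Fin N,
            Complex.exp (-2 * Real.pi * Complex.I * ((p : ℤ) : ℂ) * ((j : ℕ) : ℂ) / N) * g j) *
        Complex.exp (2 * Real.pi * Complex.I * (p : ℂ) * (n : ℂ) / N)
      = ∑ j : Fin N,
          Complex.exp (2 * Real.pi * Complex.I * (p : ℂ) * (n : ℂ) / N) *
            (1 / (N : ℂ) *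
              (Complex.exp (-2 * Real.pi * Complex.I * ((p : ℤ) : ℂ) * ((j : ℕ) : ℂ) / N) * g j)) := by
    intro p _
    rw [Finset.mul_sum, Finset.sum_mul]
    apply Finset.sum_congr rfl
    intro j _
    ring
  rw [Finset.sum_congr rfl expand, Finset.sum_comm]
  have key : ∀ j : Fin N,
      ∑ p ∈ range N,
        Complex.exp (2 * Real.pi * Complex.I * (p : ℂ) * (n : ℂ) / N) *
          (1 / (N : ℂ) *
            (Complex.exp (-2 * Real.pi * Complex.I * ((p : ℤ) : ℂ) * ((j : ℕ) : ℂ) / N) * g j))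
        = (1 / (N : ℂ)) * g j * (if (N : ℤ) ∣ ((n : ℤ) - (j : ℕ)) then (N : ℂ) else 0) := by
    intro j
    rw [← sum_exp_orth N hN ((n : ℤ) - (j : ℕ)), Finset.mul_sum]
    apply Finset.sum_congr rfl
    intro p _
    have he : Complex.exp (2 * Real.pi * Complex.I * ((((n : ℤ) - (j : ℕ)) : ℤ) : ℂ) * (p : ℂ) / N)
        = Complex.exp (2 * Real.pi * Complex.I * (p : ℂ) * (n : ℂ) / N) *
          Complex.exp (-2 * Real.pi * Complex.I * ((p : ℤ) : ℂ) * ((j : ℕ) : ℂ) / N) := by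
      rw [← Complex.exp_add]
      congr 1
      push_cast
      field_simp
      ring
    rw [he]
    ring
  rw [Finset.sum_congr rfl (fun j _ => key j)]
  rw [Finset.sum_eq_single (⟨n % N, Nat.mod_lt _ hN⟩ : Fin N)]
  · have : (N : ℤ) ∣ ((n : ℤ) - (n % N : ℕ)) := by
      have h := Nat.mod_add_div n N
      refine ⟨(n / N : ℕ), ?_⟩
      have h2 : ((n : ℤ)) = ((n % N : ℕ) : ℤ) + (N : ℤ) * ((n / N : ℕ) : ℤ) := by
        exact_mod_cast h.symm
      linarith
    rw [if_pos this]
    field_simp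
  · intro j _ hj
    have : ¬ (N : ℤ) ∣ ((n : ℤ) - (j : ℕ)) := by
      intro hdvd
      apply hj
      have hjN : (j : ℕ) < N := j.isLt
      have h1 : ((j : ℕ) : ℤ) % N = (n : ℤ) % N := Int.modEq_iff_dvd.mpr hdvd
      have h2 : ((j : ℕ) : ℤ) % N = ((j : ℕ) : ℤ) :=
        Int.emod_eq_of_lt (Int.natCast_nonneg _) (by exact_mod_cast hjN)
      have hmod : n % N = (j : ℕ) := by
        have h3 : ((n % N : ℕ) : ℤ) = ((j : ℕ) : ℤ) := by
          push_cast
          rw [← h1, h2]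
        exact_mod_cast h3
      exact Fin.ext (by simp [hmod])
    rw [if_neg this, mul_zero]
  · intro h
    exact absurd (Finset.mem_univ _) h

lemma dft_emod (M : ℕ) (hM : 0 < M) (u : Fin M → ℂ) (k : ℤ) :
    dft M u (k % M) = dft M u k := by
  unfold dft
  congr 1
  apply Finset.sum_congr rfl
  intro n _
  congr 1
  have hMc : (M : ℂ) ≠ 0 := Nat.cast_ne_zero.mpr hM.ne'
  have hk : (k % M : ℤ) = k - M * (k / M) := by
    rw [Int.emod_def]
  rw [hk]
  set q : ℤ := k / M with hq
  have : (-2 * Real.pi * Complex.I * ((k - M * q : ℤ) : ℂ) * ((n : ℕ) : ℂ) / M : ℂ)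
      = -2 * Real.pi * Complex.I * (k : ℂ) * ((n : ℕ) : ℂ) / M
        + 2 * Real.pi * Complex.I * ((q * n : ℤ) : ℂ) := by
    push_cast
    field_simp
    ring
  rw [this, Complex.exp_add, exp_two_pi_int, mul_one]

/-- Gain mismatches `g` among the `N` sub-ADCs create replicas of the input
spectrum, shifted by multiples of `f_s/N` (`L` bins), with amplitudes given by
the `N`-point DFT of the mismatch sequence. -/
theorem dft_gain_mismatch (N L : ℕ) (hN : 0 < N) (hL : 0 < L)
    (M : ℕ) (hM : M = L * N) (x : Fin M → ℂ) (g : Fin N → ℂ)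
    (y : Fin M → ℂ)
    (hy : ∀ k : Fin M, y k = (1 + g ⟨(k : ℕ) % N, Nat.mod_lt _ hN⟩) * x k) :
    ∀ m : ℕ, m < M →
      dft M y m =
        dft M x m +
          ∑ p ∈ Finset.range N,
            dft N g p * dft M x (((m : ℤ) - (L : ℤ) * (p : ℤ)) % (M : ℤ)) := by
  intro m hm
  have hMpos : 0 < M := by omega
  have hMc : (M : ℂ) ≠ 0 := Nat.cast_ne_zero.mpr hMpos.ne'
  have hper : ∀ p ∈ Finset.range N,
      dft N g p * dft M x (((m : ℤ) - (L : ℤ) * (p : ℤ)) % (M : ℤ))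
        = dft N g p * dft M x ((m : ℤ) - (L : ℤ) * (p : ℤ)) := by
    intro p _
    rw [dft_emod M hMpos]
  rw [Finset.sum_congr rfl hper]
  have dftM_def : ∀ k : ℤ, dft M x k = (1 / (M : ℂ)) *
      ∑ n : Fin M, Complex.exp (-2 * Real.pi * Complex.I * (k : ℂ) * ((n : ℕ) : ℂ) / M) * x n :=
    fun k => rfl
  have hsplit : ∀ (p : ℕ) (n : Fin M),
      Complex.exp (-2 * Real.pi * Complex.I * ((((m : ℤ) - (L : ℤ) * p : ℤ)) : ℂ) * ((n : ℕ) : ℂ) / M)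
        = Complex.exp (-2 * Real.pi * Complex.I * (m : ℂ) * ((n : ℕ) : ℂ) / M) *
          Complex.exp (2 * Real.pi * Complex.I * (p : ℂ) * ((n : ℕ) : ℂ) / N) := by
    intro p n
    rw [← Complex.exp_add]
    congr 1
    have hNc : (N : ℂ) ≠ 0 := Nat.cast_ne_zero.mpr hN.ne'
    have hLc : (L : ℂ) ≠ 0 := Nat.cast_ne_zero.mpr hL.ne'
    have hMLN : (M : ℂ) = (L : ℂ) * N := by rw [hM]; push_cast; ring
    push_cast
    rw [hMLN]
    field_simp
    ring
  have hmain : ∑ p ∈ Finset.range N, dft N g p * dft M x ((m : ℤ) - (L : ℤ) * (p : ℤ))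
      = (1 / (M : ℂ)) * ∑ n : Fin M,
          Complex.exp (-2 * Real.pi * Complex.I * (m : ℂ) * ((n : ℕ) : ℂ) / M) *
            (g ⟨(n : ℕ) % N, Nat.mod_lt _ hN⟩ * x n) := by
    have step1 : ∀ p ∈ Finset.range N,
        dft N g p * dft M x ((m : ℤ) - (L : ℤ) * (p : ℤ))
          = ∑ n : Fin M,
              (1 / (M : ℂ) * (Complex.exp (-2 * Real.pi * Complex.I * (m : ℂ) * ((n : ℕ) : ℂ) / M) * x n)) *
                (dft N g p * Complex.exp (2 * Real.pi * Complex.I * (p : ℂ) * ((n : ℕ) : ℂ) / N)) := by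
      intro p _
      rw [dftM_def, ← mul_assoc, Finset.mul_sum]
      apply Finset.sum_congr rfl
      intro n _
      rw [hsplit p n]
      ring
    rw [Finset.sum_congr rfl step1, Finset.sum_comm, Finset.mul_sum]
    apply Finset.sum_congr rfl
    intro n _
    rw [← Finset.mul_sum, inv_dft N hN g n]
    ring
  rw [hmain]
  unfold dft
  rw [← mul_add, ← Finset.sum_add_distrib]
  congr 1
  apply Finset.sum_congr rfl
  intro n _
  rw [hy n]
  push_cast
  ring
end

section
/- Let N be a positive integer, σ > 0, and let x_0, …, x_{N-1} be mutually independent real random variables on a probability space, each with law gaussianReal 0 σ². Let k be an integer with 0 < k < N such that N does not divide 2k. Then the random variable (1/N) ∑_{n=0}^{N-1} cos(2π·k·n/N)·x_n has law gaussianReal 0 (σ²/(2N)), and likewise the random variable (1/N) ∑_{n=0}^{N-1} sin(2π·k·n/N)·x_n has law gaussianReal 0 (σ²/(2N)). -/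
open MeasureTheory ProbabilityTheory Finset
open scoped NNReal

open Real

lemma gauss_conv_pointwise {a b : ℝ} (ha : 0 < a) (hb : 0 < b) (m1 m2 z : ℝ) :
    ∀ x : ℝ, ((Real.sqrt (2*π*a))⁻¹ * Real.exp (-(x - m1)^2/(2*a))) *
        ((Real.sqrt (2*π*b))⁻¹ * Real.exp (-((z - x) - m2)^2/(2*b))) =
      ((Real.sqrt (2*π*a))⁻¹ * (Real.sqrt (2*π*b))⁻¹ *
          Real.exp (-(z - m1 - m2)^2/(2*(a+b)))) *
        Real.exp (-((a+b)/(2*a*b)) * (x - (m1 + a*(z - m1 - m2)/(a+b)))^2) := by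
  intro x
  have hab : (0:ℝ) < a + b := by linarith
  have h : -(x - m1)^2/(2*a) + -((z - x) - m2)^2/(2*b) =
      -(z - m1 - m2)^2/(2*(a+b)) + -((a+b)/(2*a*b)) * (x - (m1 + a*(z - m1 - m2)/(a+b)))^2 := by
    field_simp
    ring
  calc ((Real.sqrt (2*π*a))⁻¹ * Real.exp (-(x - m1)^2/(2*a))) *
        ((Real.sqrt (2*π*b))⁻¹ * Real.exp (-((z - x) - m2)^2/(2*b)))
      = (Real.sqrt (2*π*a))⁻¹ * (Real.sqrt (2*π*b))⁻¹ *
          (Real.exp (-(x - m1)^2/(2*a)) * Real.exp (-((z - x) - m2)^2/(2*b))) := by ring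
    _ = (Real.sqrt (2*π*a))⁻¹ * (Real.sqrt (2*π*b))⁻¹ *
          (Real.exp (-(z - m1 - m2)^2/(2*(a+b))) *
            Real.exp (-((a+b)/(2*a*b)) * (x - (m1 + a*(z - m1 - m2)/(a+b)))^2)) := by
        rw [← Real.exp_add, ← Real.exp_add, h]
    _ = _ := by ring

lemma gaussianPDFReal_conv_integrable (m1 m2 : ℝ) {v1 v2 : ℝ≥0} (h1 : v1 ≠ 0) (h2 : v2 ≠ 0)
    (z : ℝ) : Integrable (fun x => gaussianPDFReal m1 v1 x * gaussianPDFReal m2 v2 (z - x)) := by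
  have ha : (0:ℝ) < v1 := by positivity
  have hb : (0:ℝ) < v2 := by positivity
  have hq : (0:ℝ) < ((v1:ℝ)+v2)/(2*v1*v2) := by positivity
  have key := gauss_conv_pointwise ha hb m1 m2 z
  simp only [gaussianPDFReal_def]
  have : (fun x => (Real.sqrt (2*π*(v1:ℝ)))⁻¹ * Real.exp (-(x - m1)^2/(2*(v1:ℝ))) *
      ((Real.sqrt (2*π*(v2:ℝ)))⁻¹ * Real.exp (-((z - x) - m2)^2/(2*(v2:ℝ))))) =
      fun x => ((Real.sqrt (2*π*(v1:ℝ)))⁻¹ * (Real.sqrt (2*π*(v2:ℝ)))⁻¹ *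
          Real.exp (-(z - m1 - m2)^2/(2*((v1:ℝ)+v2)))) *
        Real.exp (-(((v1:ℝ)+v2)/(2*v1*v2)) *
          (x - (m1 + v1*(z - m1 - m2)/((v1:ℝ)+v2)))^2) := funext key
  rw [this]
  exact (((integrable_exp_neg_mul_sq hq).comp_sub_right _).const_mul _)

lemma gaussianPDFReal_conv (m1 m2 : ℝ) {v1 v2 : ℝ≥0} (h1 : v1 ≠ 0) (h2 : v2 ≠ 0) (z : ℝ) :
    ∫ x, gaussianPDFReal m1 v1 x * gaussianPDFReal m2 v2 (z - x) =
      gaussianPDFReal (m1 + m2) (v1 + v2) z := by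
  have ha : (0:ℝ) < v1 := by positivity
  have hb : (0:ℝ) < v2 := by positivity
  have hab : (0:ℝ) < (v1:ℝ) + v2 := by linarith
  have hq : (0:ℝ) < ((v1:ℝ)+v2)/(2*v1*v2) := by positivity
  have key := gauss_conv_pointwise ha hb m1 m2 z
  simp only [gaussianPDFReal_def]
  calc ∫ x, (Real.sqrt (2*π*(v1:ℝ)))⁻¹ * Real.exp (-(x - m1)^2/(2*(v1:ℝ))) *
        ((Real.sqrt (2*π*(v2:ℝ)))⁻¹ * Real.exp (-((z - x) - m2)^2/(2*(v2:ℝ))))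
      = ∫ x, ((Real.sqrt (2*π*(v1:ℝ)))⁻¹ * (Real.sqrt (2*π*(v2:ℝ)))⁻¹ *
          Real.exp (-(z - m1 - m2)^2/(2*((v1:ℝ)+v2)))) *
        Real.exp (-(((v1:ℝ)+v2)/(2*v1*v2)) *
          (x - (m1 + v1*(z - m1 - m2)/((v1:ℝ)+v2)))^2) := by
        exact integral_congr_ae (Filter.Eventually.of_forall key)
    _ = ((Real.sqrt (2*π*(v1:ℝ)))⁻¹ * (Real.sqrt (2*π*(v2:ℝ)))⁻¹ *
          Real.exp (-(z - m1 - m2)^2/(2*((v1:ℝ)+v2)))) *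
        ∫ x, Real.exp (-(((v1:ℝ)+v2)/(2*v1*v2)) * x^2) := by
        rw [integral_const_mul]
        congr 1
        exact integral_sub_right_eq_self
          (fun x => Real.exp (-(((v1:ℝ)+v2)/(2*v1*v2)) * x^2)) _
    _ = _ := by
        rw [integral_gaussian]
        have hconst : (Real.sqrt (2*π*(v1:ℝ)))⁻¹ * (Real.sqrt (2*π*(v2:ℝ)))⁻¹ *
            Real.sqrt (π / (((v1:ℝ)+v2)/(2*v1*v2))) = (Real.sqrt (2*π*((v1:ℝ)+v2)))⁻¹ := by
          rw [← Real.sqrt_inv, ← Real.sqrt_inv, ← Real.sqrt_mul (by positivity),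
            ← Real.sqrt_mul (by positivity), ← Real.sqrt_inv]
          congr 1
          field_simp
        push_cast
        calc (Real.sqrt (2*π*(v1:ℝ)))⁻¹ * (Real.sqrt (2*π*(v2:ℝ)))⁻¹ *
              Real.exp (-(z - m1 - m2)^2/(2*((v1:ℝ)+v2))) *
              Real.sqrt (π / (((v1:ℝ)+v2)/(2*v1*v2)))
            = ((Real.sqrt (2*π*(v1:ℝ)))⁻¹ * (Real.sqrt (2*π*(v2:ℝ)))⁻¹ *
                Real.sqrt (π / (((v1:ℝ)+v2)/(2*v1*v2)))) *
              Real.exp (-(z - m1 - m2)^2/(2*((v1:ℝ)+v2))) := by ring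
          _ = (Real.sqrt (2*π*((v1:ℝ)+v2)))⁻¹ *
              Real.exp (-(z - (m1+m2))^2/(2*((v1:ℝ)+v2))) := by rw [hconst]; ring_nf

lemma gaussianReal_conv (m1 m2 : ℝ) (v1 v2 : ℝ≥0) :
    Measure.conv (gaussianReal m1 v1) (gaussianReal m2 v2) = gaussianReal (m1 + m2) (v1 + v2) := by
  -- dirac convolution helper
  have hdirac : ∀ (c : ℝ) (m : ℝ) (v : ℝ≥0),
      Measure.conv (Measure.dirac c) (gaussianReal m v) = gaussianReal (m + c) v := by
    intro c m v
    unfold Measure.conv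
    rw [Measure.dirac_prod, Measure.map_map measurable_add (measurable_prodMk_left)]
    have : ((fun x : ℝ × ℝ => x.1 + x.2) ∘ Prod.mk c) = (fun y : ℝ => c + y) := rfl
    rw [this, gaussianReal_map_const_add]
  by_cases h1 : v1 = 0
  · subst h1
    rw [gaussianReal_zero_var, hdirac, zero_add, add_comm]
  by_cases h2 : v2 = 0
  · subst h2
    rw [gaussianReal_zero_var, Measure.conv_comm, hdirac, add_zero]
  -- main case
  have hne : v1 + v2 ≠ 0 := fun h => h1 (by simpa using (add_eq_zero.mp h).1)
  ext s hs
  unfold Measure.conv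
  rw [Measure.map_apply measurable_add hs,
    Measure.prod_apply (measurable_add hs)]
  have hstep : ∀ x : ℝ, gaussianReal m2 v2 (Prod.mk x ⁻¹' ((fun p : ℝ × ℝ => p.1 + p.2) ⁻¹' s)) =
      ∫⁻ z in s, gaussianPDF (m2 + x) v2 z := by
    intro x
    have hpre : (Prod.mk x ⁻¹' ((fun p : ℝ × ℝ => p.1 + p.2) ⁻¹' s)) = (fun y => x + y) ⁻¹' s := rfl
    rw [hpre, ← Measure.map_apply (measurable_const_add x) hs, gaussianReal_map_const_add,
      gaussianReal_apply _ h2 s]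
  have hF : Measurable (fun p : ℝ × ℝ => gaussianPDF (m2 + p.1) v2 p.2) := by
    simp only [gaussianPDF_def, gaussianPDFReal_def]
    exact ENNReal.measurable_ofReal.comp (by fun_prop)
  have hFx : ∀ x : ℝ, Measurable (fun z => gaussianPDF (m2 + x) v2 z) :=
    fun x => measurable_gaussianPDF _ _
  have hmg : Measurable (fun x : ℝ => ∫⁻ z in s, gaussianPDF (m2 + x) v2 z) :=
    Measurable.lintegral_prod_right' (f := fun p : ℝ × ℝ => gaussianPDF (m2 + p.1) v2 p.2) hF
  simp_rw [hstep]
  rw [gaussianReal_of_var_ne_zero _ h1,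
    lintegral_withDensity_eq_lintegral_mul _ (measurable_gaussianPDF _ _) hmg]
  simp only [Pi.mul_apply]
  have hne_top : ∀ x, gaussianPDF m1 v1 x ≠ ⊤ := fun x => ENNReal.ofReal_ne_top
  calc ∫⁻ x, gaussianPDF m1 v1 x * ∫⁻ z in s, gaussianPDF (m2 + x) v2 z
      = ∫⁻ x, ∫⁻ z in s, gaussianPDF m1 v1 x * gaussianPDF (m2 + x) v2 z := by
        refine lintegral_congr fun x => ?_
        rw [← lintegral_const_mul _ (hFx x)]
    _ = ∫⁻ z in s, ∫⁻ x, gaussianPDF m1 v1 x * gaussianPDF (m2 + x) v2 z := by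
        refine lintegral_lintegral_swap ?_
        exact ((measurable_gaussianPDF m1 v1).comp measurable_fst |>.mul hF).aemeasurable
    _ = ∫⁻ z in s, gaussianPDF (m1 + m2) (v1 + v2) z := by
        refine setLIntegral_congr_fun hs (fun z _ => ?_)
        have hrw : ∀ x : ℝ, gaussianPDF m1 v1 x * gaussianPDF (m2 + x) v2 z =
            ENNReal.ofReal (gaussianPDFReal m1 v1 x * gaussianPDFReal m2 v2 (z - x)) := by
          intro x
          rw [gaussianPDF_def, gaussianPDF_def, gaussianPDFReal_sub,
            ENNReal.ofReal_mul (gaussianPDFReal_nonneg _ _ _)]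
        simp_rw [hrw]
        rw [← ofReal_integral_eq_lintegral_ofReal
          (gaussianPDFReal_conv_integrable m1 m2 h1 h2 z)
          (Filter.Eventually.of_forall fun x =>
            mul_nonneg (gaussianPDFReal_nonneg _ _ _) (gaussianPDFReal_nonneg _ _ _)),
          gaussianPDFReal_conv m1 m2 h1 h2 z, gaussianPDF_def]
  rw [gaussianReal_apply _ hne s]

lemma indep_gaussian_add {Ω : Type*} [MeasurableSpace Ω] (μ : Measure Ω) [IsProbabilityMeasure μ]
    {X Y : Ω → ℝ} (hX : Measurable X) (hY : Measurable Y) (hind : IndepFun X Y μ)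
    {mX mY : ℝ} {vX vY : ℝ≥0} (hlX : Measure.map X μ = gaussianReal mX vX)
    (hlY : Measure.map Y μ = gaussianReal mY vY) :
    Measure.map (fun ω => X ω + Y ω) μ = gaussianReal (mX + mY) (vX + vY) := by
  have hprod := (indepFun_iff_map_prod_eq_prod_map_map hX.aemeasurable hY.aemeasurable).mp hind
  have : (fun ω => X ω + Y ω) = (fun p : ℝ × ℝ => p.1 + p.2) ∘ (fun ω => (X ω, Y ω)) := rfl
  rw [this, ← Measure.map_map measurable_add (hX.prodMk hY), hprod, hlX, hlY,
    ← gaussianReal_conv]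
  rfl

lemma sum_indep_gaussian {Ω : Type*} [MeasurableSpace Ω] (μ : Measure Ω) [IsProbabilityMeasure μ]
    {ι : Type*} (x : ι → Ω → ℝ) (hmeas : ∀ n, Measurable (x n))
    (hindep : iIndepFun x μ) (v : ι → ℝ≥0)
    (hlaw : ∀ n, Measure.map (x n) μ = gaussianReal 0 (v n)) (s : Finset ι) :
    Measure.map (fun ω => ∑ n ∈ s, x n ω) μ = gaussianReal 0 (∑ n ∈ s, v n) := by
  classical
  induction s using Finset.induction_on with
  | empty =>
      simp only [Finset.sum_empty]
      rw [Measure.map_const, measure_univ, one_smul, gaussianReal_zero_var]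
  | insert i t hnotin ih =>
      have hind : IndepFun (∑ j ∈ t, x j) (x i) μ :=
        hindep.indepFun_finset_sum_of_notMem hmeas hnotin
      have hsum_meas : Measurable (fun ω => ∑ n ∈ t, x n ω) := by
        exact Finset.measurable_sum t fun n _ => hmeas n
      have h1 : Measure.map (fun ω => ∑ n ∈ t, x n ω) μ = gaussianReal 0 (∑ n ∈ t, v n) := ih
      have hind' : IndepFun (fun ω => ∑ j ∈ t, x j ω) (x i) μ := by
        have : (∑ j ∈ t, x j) = fun ω => ∑ j ∈ t, x j ω := by ext ω; simp
        rwa [this] at hind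
      have := indep_gaussian_add μ hsum_meas (hmeas i) hind' h1 (hlaw i)
      have hfun : (fun ω => ∑ n ∈ insert i t, x n ω) = fun ω => (∑ n ∈ t, x n ω) + x i ω := by
        ext ω; rw [Finset.sum_insert hnotin]; ring
      rw [hfun, this, zero_add, add_comm, Finset.sum_insert hnotin]

lemma sum_cos_eq_zero (N : ℕ) (hN : 0 < N) (k : ℤ) (hk2 : ¬ ((N : ℤ) ∣ 2 * k)) :
    ∑ n ∈ Finset.range N, Real.cos ((4 * π * (k:ℝ) / N) * n) = 0 := by
  set θ : ℝ := 4 * π * (k:ℝ) / N with hθ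
  set r : ℂ := Complex.exp (θ * Complex.I) with hr
  have hNne : (N:ℝ) ≠ 0 := Nat.cast_ne_zero.mpr hN.ne'
  have hNCne : (N:ℂ) ≠ 0 := Nat.cast_ne_zero.mpr hN.ne'
  have hrne : r ≠ 1 := by
    intro h1
    rw [hr, Complex.exp_eq_one_iff] at h1
    obtain ⟨m, hm⟩ := h1
    have him : θ = m * (2 * π) := by
      have := congrArg Complex.im hm
      simpa using this
    apply hk2
    refine ⟨m, ?_⟩
    have hπ : (π:ℝ) ≠ 0 := Real.pi_ne_zero
    have : 4 * π * (k:ℝ) / N = m * (2 * π) := by rw [← hθ, him]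
    field_simp at this
    have h2 : 2 * (k:ℝ) = (m:ℝ) * N := by
      nlinarith [Real.pi_pos]
    have : 2 * k = m * N := by exact_mod_cast h2
    rw [this]; ring
  have hrN : r ^ N = 1 := by
    rw [hr, ← Complex.exp_nat_mul]
    have harg : (N:ℂ) * (θ * Complex.I) = (2*k : ℤ) * (2 * π * Complex.I) := by
      have : (N:ℂ) * θ = (2*k : ℤ) * (2 * π) := by
        rw [hθ]
        push_cast
        field_simp
        ring
      calc (N:ℂ) * (θ * Complex.I) = ((N:ℂ) * θ) * Complex.I := by ring
        _ = ((2*k : ℤ) * (2 * π)) * Complex.I := by rw [this]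
        _ = (2*k : ℤ) * (2 * π * Complex.I) := by ring
    rw [harg, Complex.exp_int_mul_two_pi_mul_I]
  have hgeo : ∑ n ∈ Finset.range N, r ^ n = 0 := by
    rw [geom_sum_eq hrne, hrN, sub_self, zero_div]
  have hre : ∀ n : ℕ, Real.cos (θ * n) = (r ^ n).re := by
    intro n
    rw [hr, ← Complex.exp_nat_mul]
    have : (n:ℂ) * (θ * Complex.I) = ((θ * n : ℝ) : ℂ) * Complex.I := by push_cast; ring
    rw [this, Complex.exp_ofReal_mul_I_re]
  simp_rw [hre]
  rw [← Complex.re_sum, hgeo, Complex.zero_re]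

lemma sum_cos_sq (N : ℕ) (hN : 0 < N) (k : ℤ) (hk2 : ¬ ((N : ℤ) ∣ 2 * k)) :
    ∑ n ∈ Finset.range N, Real.cos (2 * π * (k:ℝ) * n / N) ^ 2 = N / 2 := by
  have h0 := sum_cos_eq_zero N hN k hk2
  have : ∀ n ∈ Finset.range N, Real.cos (2 * π * (k:ℝ) * n / N) ^ 2 =
      1/2 + Real.cos ((4 * π * (k:ℝ) / N) * n) / 2 := by
    intro n _
    rw [Real.cos_sq]
    congr 2
    ring
  rw [Finset.sum_congr rfl this, Finset.sum_add_distrib, ← Finset.sum_div, ← Finset.sum_div, h0]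
  simp

lemma sum_sin_sq (N : ℕ) (hN : 0 < N) (k : ℤ) (hk2 : ¬ ((N : ℤ) ∣ 2 * k)) :
    ∑ n ∈ Finset.range N, Real.sin (2 * π * (k:ℝ) * n / N) ^ 2 = N / 2 := by
  have h := sum_cos_sq N hN k hk2
  have : ∀ n ∈ Finset.range N, Real.sin (2 * π * (k:ℝ) * n / N) ^ 2 =
      1 - Real.cos (2 * π * (k:ℝ) * n / N) ^ 2 := fun n _ => Real.sin_sq _
  rw [Finset.sum_congr rfl this, Finset.sum_sub_distrib, h]
  simp
  ring

lemma weighted_sum_gaussian {Ω : Type*} [MeasurableSpace Ω] (μ : Measure Ω)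
    [IsProbabilityMeasure μ] (N : ℕ) (hN : 0 < N) (σ : ℝ≥0)
    (x : Fin N → Ω → ℝ) (hmeas : ∀ n, Measurable (x n))
    (hindep : iIndepFun x μ)
    (hlaw : ∀ n, Measure.map (x n) μ = gaussianReal 0 (σ ^ 2))
    (c : Fin N → ℝ) (hc : ∑ n : Fin N, c n ^ 2 = N / 2) :
    Measure.map (fun ω => (1 / (N : ℝ)) * ∑ n : Fin N, c n * x n ω) μ =
      gaussianReal 0 (σ ^ 2 / (2 * N)) := by
  have hNne : (N:ℝ) ≠ 0 := Nat.cast_ne_zero.mpr hN.ne'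
  set y : Fin N → Ω → ℝ := fun n ω => c n * x n ω with hy
  have hy_meas : ∀ n, Measurable (y n) := fun n => (hmeas n).const_mul _
  have hy_indep : iIndepFun y μ :=
    hindep.comp (fun n t => c n * t) (fun n => measurable_const_mul _)
  set v : Fin N → ℝ≥0 := fun n => NNReal.mk ((c n)^2) (sq_nonneg _) * σ^2 with hv
  have hy_law : ∀ n, Measure.map (y n) μ = gaussianReal 0 (v n) := by
    intro n
    have : y n = (fun t => c n * t) ∘ x n := rfl
    rw [this, ← Measure.map_map (measurable_const_mul _) (hmeas n), hlaw n,
      gaussianReal_map_const_mul, mul_zero]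
  have hsum := sum_indep_gaussian μ y hy_meas hy_indep v hy_law Finset.univ
  have hS_meas : Measurable (fun ω => ∑ n : Fin N, y n ω) :=
    Finset.measurable_sum _ fun n _ => hy_meas n
  have hcomp : (fun ω => (1 / (N : ℝ)) * ∑ n : Fin N, c n * x n ω) =
      (fun t => (1 / (N : ℝ)) * t) ∘ (fun ω => ∑ n : Fin N, y n ω) := rfl
  rw [hcomp, ← Measure.map_map (measurable_const_mul _) hS_meas, hsum,
    gaussianReal_map_const_mul, mul_zero]
  congr 1
  apply NNReal.coe_injective
  push_cast
  simp only [hv, NNReal.coe_mul, NNReal.coe_pow, NNReal.coe_mk]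
  rw [← Finset.sum_mul, hc]
  field_simp

/-- For an i.i.d. `N(0,σ²)` sequence of length `N` and a non-DC, non-Nyquist
bin index `k` (i.e. `0 < k < N` with `N ∤ 2k`), the real part
`(1/N) ∑_n cos(2πkn/N)·x_n` and minus the imaginary part
`(1/N) ∑_n sin(2πkn/N)·x_n` of the `k`-th normalized DFT bin are each Gaussian
with mean `0` and variance `σ²/(2N)`. -/
theorem dft_bin_real_imag_gaussian
    {Ω : Type*} [MeasurableSpace Ω] (μ : Measure Ω) [IsProbabilityMeasure μ]
    (N : ℕ) (hN : 0 < N) (σ : ℝ≥0) (hσ : 0 < σ)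
    (x : Fin N → Ω → ℝ)
    (hmeas : ∀ n, Measurable (x n))
    (hindep : iIndepFun x μ)
    (hlaw : ∀ n, Measure.map (x n) μ = gaussianReal 0 (σ ^ 2))
    (k : ℤ) (hk0 : 0 < k) (hkN : k < N) (hk2 : ¬ ((N : ℤ) ∣ 2 * k)) :
    Measure.map
        (fun ω => (1 / (N : ℝ)) *
          ∑ n : Fin N, Real.cos (2 * Real.pi * (k : ℝ) * ((n : ℕ) : ℝ) / (N : ℝ)) * x n ω) μ =
      gaussianReal 0 (σ ^ 2 / (2 * N)) ∧
    Measure.map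
        (fun ω => (1 / (N : ℝ)) *
          ∑ n : Fin N, Real.sin (2 * Real.pi * (k : ℝ) * ((n : ℕ) : ℝ) / (N : ℝ)) * x n ω) μ =
      gaussianReal 0 (σ ^ 2 / (2 * N)) := by
  constructor
  · refine weighted_sum_gaussian μ N hN σ x hmeas hindep hlaw _ ?_
    rw [Fin.sum_univ_eq_sum_range (fun n => Real.cos (2 * π * (k:ℝ) * n / N) ^ 2)]
    exact sum_cos_sq N hN k hk2
  · refine weighted_sum_gaussian μ N hN σ x hmeas hindep hlaw _ ?_
    rw [Fin.sum_univ_eq_sum_range (fun n => Real.sin (2 * π * (k:ℝ) * n / N) ^ 2)]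
    exact sum_sin_sq N hN k hk2
end
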